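/- arXiv:0806.2753 — 10 statements merged into one kernel-verified Lean document; each statement's English description precedes it below -/
import Mathlib

section
/- Let V be a real inner product space and let t, g be linear isometries of V with t ∘ t = id, g ∘ g ∘ g = id and t ∘ g ∘ t = g⁻¹. Let A be a ℤ-submodule of V such that t(a) = −a for all a ∈ A and a + g(a) + g(g(a)) = 0 for all a ∈ A. Then: (i) A ∩ g(A) = 0; (ii) ⟪x, g(y)⟫ = −(1/2)·⟪x, y⟫ for all x, y ∈ A; (iii) {v ∈ A + g(A) : ⟪v, a⟫ = 0 for all a ∈ A} equals the image (g − g²)(A) of A under the linear map g − g², and ⟪(g − g²)(x), (g − g²)(y)⟫ = 3·⟪x, y⟫ for all x, y ∈ A. -/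
open scoped InnerProductSpace

local notation "⟪" x ", " y "⟫" => @inner ℝ _ _ x y

noncomputable section

theorem dih6_tensor_structure
    {V : Type*} [NormedAddCommGroup V] [InnerProductSpace ℝ V]
    (t g : V ≃ₗᵢ[ℝ] V)
    (ht2 : ∀ x, t (t x) = x)
    (hg3 : ∀ x, g (g (g x)) = x)
    (htgt : ∀ x, t (g (t x)) = g.symm x)
    (A : Submodule ℤ V)
    (hAt : ∀ a ∈ A, t a = -a)
    (hAg : ∀ a ∈ A, a + g a + g (g a) = 0) :
    -- (i) A ∩ g(A) = 0
    ((A : Set V) ∩ (⇑g '' (A : Set V)) = {0}) ∧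
    -- (ii) ⟪x, g y⟫ = -(1/2) ⟪x, y⟫ for x, y ∈ A
    (∀ x ∈ A, ∀ y ∈ A, ⟪x, g y⟫ = -(1/2) * ⟪x, y⟫) ∧
    -- (iii) ann_{A + g(A)}(A) = (g - g²)(A), a √3-scaled copy of A
    ({v : V | v ∈ A ⊔ Submodule.span ℤ (⇑g '' (A : Set V)) ∧ ∀ a ∈ A, ⟪v, a⟫ = (0 : ℝ)}
        = (fun a => g a - g (g a)) '' (A : Set V)) ∧
    (∀ x ∈ A, ∀ y ∈ A, ⟪g x - g (g x), g y - g (g y)⟫ = 3 * ⟪x, y⟫) := by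
  have hgsymm : ∀ x, g.symm x = g (g x) := by
    intro x
    conv_lhs => rw [← hg3 x, g.symm_apply_apply]
  -- ⟪x, g y⟫ = ⟪x, g (g y)⟫ for x, y ∈ A
  have hkey : ∀ x ∈ A, ∀ y ∈ A, ⟪x, g y⟫ = ⟪x, g (g y)⟫ := by
    intro x hx y hy
    have h1 : t (g y) = -(g (g y)) := by
      have : t (g (t (t y))) = g.symm (t y) := htgt (t y)
      rw [ht2] at this
      rw [this, hAt y hy, map_neg, hgsymm]
    calc ⟪x, g y⟫ = ⟪t x, t (g y)⟫ := (t.inner_map_map x (g y)).symm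
      _ = ⟪-x, -(g (g y))⟫ := by rw [hAt x hx, h1]
      _ = ⟪x, g (g y)⟫ := inner_neg_neg x _
  have hii : ∀ x ∈ A, ∀ y ∈ A, ⟪x, g y⟫ = -(1/2) * ⟪x, y⟫ := by
    intro x hx y hy
    have h2 : ⟪x, y⟫ + ⟪x, g y⟫ + ⟪x, g (g y)⟫ = 0 := by
      have := hAg y hy
      have h3 : ⟪x, y + g y + g (g y)⟫ = (0:ℝ) := by rw [this, inner_zero_right]
      rw [inner_add_right, inner_add_right] at h3
      linarith
    have h4 := hkey x hx y hy
    linarith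
  refine ⟨?_, hii, ?_, ?_⟩
  · -- (i)
    ext v
    simp only [Set.mem_inter_iff, Set.mem_image, SetLike.mem_coe, Set.mem_singleton_iff]
    constructor
    · rintro ⟨hvA, b, hbA, rfl⟩
      have h1 := hii (g b) hvA b hbA
      have h2 : ⟪g b, g b⟫ = ⟪b, b⟫ := by
        have := g.inner_map_map b b
        exact this
      have h3 : ⟪b, b⟫ = ‖b‖ ^ 2 := real_inner_self_eq_norm_sq b
      have h4 : |⟪g b, b⟫| ≤ ‖g b‖ * ‖b‖ := abs_real_inner_le_norm _ _
      rw [g.norm_map] at h4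
      have hb : b = 0 := by
        have := abs_le.mp h4
        rw [← norm_eq_zero]
        nlinarith [norm_nonneg b]
      rw [hb, map_zero]
    · rintro rfl
      exact ⟨A.zero_mem, 0, A.zero_mem, map_zero g⟩
  · -- (iii) set equality
    have hspan : ∀ v, v ∈ Submodule.span ℤ (⇑g '' (A : Set V)) ↔ ∃ b ∈ A, g b = v := by
      intro v
      set f : V →ₗ[ℤ] V := (g.toLinearEquiv.toLinearMap.restrictScalars ℤ) with hf
      have himg : ⇑g '' (A : Set V) = ⇑f '' (A : Set V) := rfl
      rw [himg, ← Submodule.map_coe, Submodule.span_eq]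
      exact Submodule.mem_map
    ext v
    simp only [Set.mem_setOf_eq, Set.mem_image, SetLike.mem_coe]
    constructor
    · rintro ⟨hv, hperp⟩
      obtain ⟨a, haA, s, hs, rfl⟩ := Submodule.mem_sup.mp hv
      obtain ⟨b, hbA, rfl⟩ := (hspan s).mp hs
      have e1 : ⟪a, a⟫ + ⟪a, g b⟫ = 0 := by
        have h := hperp a haA
        rw [inner_add_left] at h
        have hc := real_inner_comm (g b) a
        linarith
      have e2 : ⟪a, b⟫ + ⟪b, g b⟫ = 0 := by
        have h := hperp b hbA
        rw [inner_add_left] at h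
        have hc := real_inner_comm (g b) b
        linarith
      rw [hii a haA b hbA] at e1
      rw [hii b hbA b hbA] at e2
      have hb2 : b = a + a := by
        have hz : ⟪b - (a + a), b - (a + a)⟫ = (0:ℝ) := by
          simp only [inner_sub_left, inner_sub_right, inner_add_left, inner_add_right]
          have hc := real_inner_comm a b
          linarith
        exact sub_eq_zero.mp (inner_self_eq_zero.mp hz)
      refine ⟨a, haA, ?_⟩
      have hgg : g (g a) = -(a + g a) := eq_neg_of_add_eq_zero_right (hAg a haA)
      rw [hb2, hgg, map_add]
      abel
    · rintro ⟨x, hx, rfl⟩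
      have hgg : g (g x) = -(x + g x) := eq_neg_of_add_eq_zero_right (hAg x hx)
      constructor
      · refine Submodule.mem_sup.mpr ⟨x, hx, g (x + x), (hspan _).mpr ⟨x + x, A.add_mem hx hx, rfl⟩, ?_⟩
        rw [hgg, map_add]
        abel
      · intro a ha
        rw [inner_sub_left]
        have h1 := hkey a ha x hx
        have h2 := real_inner_comm (g x) a
        have h3 := real_inner_comm (g (g x)) a
        linarith
  · -- inner product scaling
    intro x hx y hy
    have h1 : ⟪g x, g y⟫ = ⟪x, y⟫ := g.inner_map_map x y
    have h2 : ⟪g (g x), g (g y)⟫ = ⟪x, y⟫ := by rw [g.inner_map_map, g.inner_map_map]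
    have h3 : ⟪g x, g (g y)⟫ = ⟪x, g y⟫ := g.inner_map_map x (g y)
    have h4 : ⟪g (g x), g y⟫ = ⟪g x, y⟫ := g.inner_map_map (g x) y
    have h5 := hii x hx y hy
    have h6 : ⟪g x, y⟫ = -(1/2) * ⟪x, y⟫ := by
      rw [real_inner_comm, hii y hy x hx, real_inner_comm]
    simp only [inner_sub_left, inner_sub_right]
    rw [h1, h2, h3, h4, h5, h6]
    ring
end
end

section
/- Let A = ℤ² equipped with the symmetric ℤ-bilinear form a whose Gram matrix is !![2, −1; −1, 2] (the A2 form). Let B be a finitely generated free ℤ-module with a symmetric ℤ-bilinear form b such that b(z, z) > 0 for every nonzero z ∈ B, and let m be a positive integer with b(z, z) ≥ m for all nonzero z ∈ B and b(z₀, z₀) = m for some z₀ ≠ 0. Equip the tensor product A ⊗ℤ B with the tensor product bilinear form a ⊗ b, determined by (a ⊗ b)(u ⊗ z, u′ ⊗ z′) = a(u, u′)·b(z, z′). Then every nonzero w ∈ A ⊗ B satisfies (a ⊗ b)(w, w) ≥ 2m, and the vectors w ∈ A ⊗ B with (a ⊗ b)(w, w) = 2m are exactly the pure tensors u ⊗ z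 with a(u, u) = 2 and b(z, z) = m. -/
open scoped TensorProduct

noncomputable section

/-- The `A2` bilinear form on `ℤ²`, with Gram matrix `!![2, -1; -1, 2]`. -/
def A2Form : LinearMap.BilinForm ℤ (Fin 2 → ℤ) :=
  Matrix.toBilin' !![2, -1; -1, 2]

lemma A2_apply (u v : Fin 2 → ℤ) :
    A2Form u v = 2 * u 0 * v 0 - u 0 * v 1 - u 1 * v 0 + 2 * u 1 * v 1 := by
  simp [A2Form, Matrix.toBilin'_apply', dotProduct, Matrix.mulVec, Matrix.vecHead, Matrix.vecTail,
    Fin.sum_univ_two]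
  ring

section aux
variable {B : Type*} [AddCommGroup B] [Module ℤ B]

lemma decomp (w : (Fin 2 → ℤ) ⊗[ℤ] B) :
    ∃ x y : B, w = ![1,0] ⊗ₜ[ℤ] x + ![0,1] ⊗ₜ[ℤ] y := by
  induction w using TensorProduct.induction_on with
  | zero => exact ⟨0, 0, by simp⟩
  | tmul u z =>
    refine ⟨u 0 • z, u 1 • z, ?_⟩
    have hu : u = u 0 • ![1,0] + u 1 • ![0,1] := by
      funext i; fin_cases i <;> simp
    conv_lhs => rw [hu, TensorProduct.add_tmul, ← TensorProduct.smul_tmul',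
      ← TensorProduct.smul_tmul']
    exact congrArg₂ (· + ·) (map_zsmul (TensorProduct.mk ℤ (Fin 2 → ℤ) B ![1, 0]) (u 0) z).symm
      (map_zsmul (TensorProduct.mk ℤ (Fin 2 → ℤ) B ![0, 1]) (u 1) z).symm
  | add w1 w2 h1 h2 =>
    obtain ⟨x1, y1, rfl⟩ := h1
    obtain ⟨x2, y2, rfl⟩ := h2
    refine ⟨x1 + x2, y1 + y2, ?_⟩
    rw [TensorProduct.tmul_add, TensorProduct.tmul_add]
    abel

lemma Qcalc (b : LinearMap.BilinForm ℤ B) (x y : B) :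
    (A2Form.tmul b) (![1,0] ⊗ₜ[ℤ] x + ![0,1] ⊗ₜ[ℤ] y)
      (![1,0] ⊗ₜ[ℤ] x + ![0,1] ⊗ₜ[ℤ] y)
      = 2 * b x x - b x y - b y x + 2 * b y y := by
  simp [LinearMap.BilinForm.tensorDistrib_tmul, A2_apply, smul_eq_mul]
  ring

lemma Qcalc' (b : LinearMap.BilinForm ℤ B) (x y : B) :
    (A2Form.tmul b) (![1,0] ⊗ₜ[ℤ] x + ![0,1] ⊗ₜ[ℤ] y)
      (![1,0] ⊗ₜ[ℤ] x + ![0,1] ⊗ₜ[ℤ] y)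
      = b x x + b y y + b (x - y) (x - y) := by
  rw [Qcalc]
  simp only [map_sub, LinearMap.sub_apply]
  ring

end aux

theorem minimal_vectors_of_A2_tensor
    {B : Type*} [AddCommGroup B] [Module ℤ B] [Module.Free ℤ B] [Module.Finite ℤ B]
    (b : LinearMap.BilinForm ℤ B) (hsymm : ∀ z w : B, b z w = b w z)
    (hpos : ∀ z : B, z ≠ 0 → 0 < b z z)
    (m : ℤ) (hm : 0 < m)
    (hmin : ∀ z : B, z ≠ 0 → m ≤ b z z)
    (hmem : ∃ z₀ : B, z₀ ≠ 0 ∧ b z₀ z₀ = m) :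
    (∀ w : (Fin 2 → ℤ) ⊗[ℤ] B, w ≠ 0 → 2 * m ≤ (A2Form.tmul b) w w) ∧
    (∀ w : (Fin 2 → ℤ) ⊗[ℤ] B,
      (A2Form.tmul b) w w = 2 * m ↔
        ∃ (u : Fin 2 → ℤ) (z : B), w = u ⊗ₜ[ℤ] z ∧ A2Form u u = 2 ∧ b z z = m) := by
  have hnn : ∀ z : B, 0 ≤ b z z := by
    intro z
    by_cases hz : z = 0
    · simp [hz]
    · exact (hpos z hz).le
  constructor
  · intro w hw
    obtain ⟨x, y, rfl⟩ := decomp w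
    rw [Qcalc']
    by_cases hx : x = 0
    · by_cases hy : y = 0
      · exact absurd (by simp [hx, hy]) hw
      · have h1 := hmin y hy
        have h2 : b (x - y) (x - y) = b y y := by
          rw [hx]; simp
        linarith [hnn x]
    · by_cases hy : y = 0
      · have h1 := hmin x hx
        have h2 : b (x - y) (x - y) = b x x := by
          rw [hy]; simp
        linarith [hnn y]
      · linarith [hmin x hx, hmin y hy, hnn (x - y)]
  · intro w
    constructor
    · intro hQ
      obtain ⟨x, y, rfl⟩ := decomp w
      rw [Qcalc'] at hQ
      by_cases hx : x = 0
      · by_cases hy : y = 0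
        · exfalso
          rw [hx, hy] at hQ
          simp at hQ
          linarith
        · refine ⟨![0,1], y, by simp [hx], by rw [A2_apply]; norm_num, ?_⟩
          have h2 : b (x - y) (x - y) = b y y := by rw [hx]; simp
          rw [hx] at hQ
          simp [h2] at hQ
          · rw [hx] at h2; linarith
      · by_cases hy : y = 0
        · refine ⟨![1,0], x, by simp [hy], by rw [A2_apply]; norm_num, ?_⟩
          have h2 : b (x - y) (x - y) = b x x := by rw [hy]; simp
          rw [hy] at hQ h2
          simp at hQ
          linarith
        · have hbx := hmin x hx
          have hby := hmin y hy
          have hd : b (x - y) (x - y) = 0 := le_antisymm (by linarith) (hnn _)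
          have hxy : x = y := by
            by_contra h
            have : x - y ≠ 0 := sub_ne_zero.mpr h
            exact absurd hd (ne_of_gt (hpos _ this))
          subst hxy
          have hbxm : b x x = m := by
            rw [hd] at hQ; linarith
          refine ⟨![1,1], x, ?_, by rw [A2_apply]; norm_num, hbxm⟩
          rw [← TensorProduct.add_tmul]
          congr 1
          funext i; fin_cases i <;> simp
    · rintro ⟨u, z, rfl, hu, hz⟩
      have : (A2Form.tmul b) (u ⊗ₜ[ℤ] z) (u ⊗ₜ[ℤ] z) = b z z • A2Form u u :=
        LinearMap.BilinForm.tensorDistrib_tmul _ _ _ _ _ _ _ _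
      rw [this, hu, hz, smul_eq_mul]
      ring

end
end

section
/- Let L be a free ℤ-module and L₁ ⊆ L a submodule such that the quotient L ⧸ L₁ is finite, say of cardinality n. Let K be an abelian group on which multiplication by n is bijective. Then every ℤ-bilinear map f : L₁ × L₁ → K extends uniquely to a ℤ-bilinear map on L: there exists a unique ℤ-bilinear F : L × L → K whose restriction to L₁ × L₁ equals f. -/
noncomputable section

theorem bilinear_extension_unique
    {L : Type*} [AddCommGroup L] [Module.Free ℤ L]
    (L₁ : Submodule ℤ L) [Finite (L ⧸ L₁)] (n : ℕ) (hn : Nat.card (L ⧸ L₁) = n)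
    {K : Type*} [AddCommGroup K]
    (hK : Function.Bijective fun k : K => n • k)
    (f : L₁ →ₗ[ℤ] L₁ →ₗ[ℤ] K) :
    ∃! F : L →ₗ[ℤ] L →ₗ[ℤ] K, ∀ x y : L₁, F (x : L) (y : L) = f x y := by
  -- multiplication by n as an additive equivalence of K
  have hadd : ∀ a b : K, n • (a + b) = n • a + n • b := fun a b => smul_add n a b
  let φ : K ≃+ K := { Equiv.ofBijective _ hK with map_add' := hadd }
  have hφ : ∀ k : K, φ k = n • k := fun k => rfl
  have hφsymm : ∀ k : K, φ.symm (n • k) = k := fun k => φ.symm_apply_apply k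
  have hφsymm' : ∀ k : K, n • φ.symm k = k := fun k => φ.apply_symm_apply k
  let ψ : K →ₗ[ℤ] K := φ.symm.toAddMonoidHom.toIntLinearMap
  have hψ : ∀ k : K, ψ k = φ.symm k := fun k => rfl
  -- n • x lies in L₁ for all x
  have hmem : ∀ x : L, n • x ∈ L₁ := by
    intro x
    have : n • (Submodule.Quotient.mk x : L ⧸ L₁) = 0 := by
      rw [← hn]; exact card_nsmul_eq_zero'
    rwa [← Submodule.Quotient.mk_smul, Submodule.Quotient.mk_eq_zero] at this
  let j : L →ₗ[ℤ] L₁ :=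
    { toFun := fun x => ⟨n • x, hmem x⟩
      map_add' := fun a b => Subtype.ext (smul_add n a b)
      map_smul' := fun c a => Subtype.ext (smul_comm n c a) }
  have hj : ∀ x : L, ((j x : L₁) : L) = n • x := fun x => rfl
  have hj' : ∀ x : L₁, j (x : L) = n • x := fun x => by ext; simp [hj]
  let F : L →ₗ[ℤ] L →ₗ[ℤ] K := ((f.compl₁₂ j j).compr₂ ψ).compr₂ ψ
  have hF : ∀ x y : L, F x y = φ.symm (φ.symm (f (j x) (j y))) := fun x y => rfl
  have key : ∀ (G : L →ₗ[ℤ] L →ₗ[ℤ] K) (a b : L₁), G ((n:ℕ) • (a:L)) ((n:ℕ) • (b:L)) = n • n • G a b := by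
    intro G a b
    rw [map_nsmul, map_nsmul, LinearMap.smul_apply]
  have keyf : ∀ a b : L₁, f ((n:ℕ) • a) ((n:ℕ) • b) = n • n • f a b := by
    intro a b
    rw [map_nsmul, map_nsmul, LinearMap.smul_apply]
  refine ⟨F, ?_, ?_⟩
  · intro x y
    rw [hF, hj', hj', keyf, hφsymm, hφsymm]
  · intro G hG
    ext x y
    apply hK.injective
    apply hK.injective
    show n • n • G x y = n • n • F x y
    have hGn : n • n • G x y = G (n • x) (n • y) := by
      rw [map_nsmul, map_nsmul, LinearMap.smul_apply]
    have hFn : n • n • F x y = F (n • x) (n • y) := by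
      rw [map_nsmul, map_nsmul, LinearMap.smul_apply]
    rw [hGn, hFn, ← hj x, ← hj y, hG]
    rw [hF, hj', hj', keyf, hφsymm, hφsymm]

end
end

section
/- Let V be a finite-dimensional real inner product space and let X ⊆ V be an integral lattice of rank m ≥ 1, i.e., a ℤ-submodule with ⟪x, y⟫ ∈ ℤ for all x, y ∈ X and whose ℝ-span has dimension m. Let r ≥ 1 be an integer and let W be a ℤ-submodule of V with X ⊆ W, with ⟪w, x⟫ ∈ ℤ for all w ∈ W and x ∈ X, and with W ⧸ X isomorphic as an abelian group to (ℤ/2ℤ)^r. If every w ∈ W \ X satisfies ⟪w, w⟫ ∉ ℤ, then r = 1. -/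
open scoped InnerProductSpace

local notation "⟪" x ", " y "⟫" => @inner ℝ _ _ x y

noncomputable section

theorem index_two_overlattice_with_nonintegral_cosets
    {V : Type*} [NormedAddCommGroup V] [InnerProductSpace ℝ V] [FiniteDimensional ℝ V]
    (X W : Submodule ℤ V) (m : ℕ) (hm : 1 ≤ m)
    (hrank : Module.finrank ℝ (Submodule.span ℝ (X : Set V)) = m)
    (hXint : ∀ x ∈ X, ∀ y ∈ X, ∃ n : ℤ, ⟪x, y⟫ = (n : ℝ))
    (r : ℕ) (hr : 1 ≤ r)
    (hXW : X ≤ W)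
    (hWX : ∀ w ∈ W, ∀ x ∈ X, ∃ n : ℤ, ⟪w, x⟫ = (n : ℝ))
    (hquot : Nonempty ((W ⧸ X.comap W.subtype) ≃+ (Fin r → ZMod 2)))
    (hnonint : ∀ w ∈ W, w ∉ X → ¬∃ n : ℤ, ⟪w, w⟫ = (n : ℝ)) :
    r = 1 := by
  by_contra hne
  have hr2 : 2 ≤ r := by omega
  obtain ⟨e⟩ := hquot
  set Q := X.comap W.subtype with hQ
  have h01 : (⟨0, by omega⟩ : Fin r) ≠ ⟨1, by omega⟩ := by simp [Fin.ext_iff]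
  set a : W ⧸ Q := e.symm (Pi.single ⟨0, by omega⟩ 1) with ha
  set b : W ⧸ Q := e.symm (Pi.single ⟨1, by omega⟩ 1) with hb
  obtain ⟨w₁, hw₁⟩ := Submodule.Quotient.mk_surjective Q a
  obtain ⟨w₂, hw₂⟩ := Submodule.Quotient.mk_surjective Q b
  have memX : ∀ w : W, Submodule.Quotient.mk (p := Q) w = 0 ↔ (w : V) ∈ X := by
    intro w
    rw [Submodule.Quotient.mk_eq_zero, hQ, Submodule.mem_comap]
    rfl
  have two_tor : ∀ q : W ⧸ Q, q + q = 0 := by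
    intro q
    apply e.injective
    rw [map_add, map_zero]
    funext i
    exact CharTwo.add_self_eq_zero _
  -- a ≠ 0, b ≠ 0, a + b ≠ 0
  have ea : e a = Pi.single ⟨0, by omega⟩ 1 := by rw [ha, e.apply_symm_apply]
  have eb : e b = Pi.single ⟨1, by omega⟩ 1 := by rw [hb, e.apply_symm_apply]
  have ha0 : a ≠ 0 := by
    intro h
    have h1 : (Pi.single ⟨0, by omega⟩ 1 : Fin r → ZMod 2) = 0 := by
      rw [← ea, h, map_zero]
    have := congrFun h1 ⟨0, by omega⟩
    simp at this
  have hb0 : b ≠ 0 := by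
    intro h
    have h1 : (Pi.single ⟨1, by omega⟩ 1 : Fin r → ZMod 2) = 0 := by
      rw [← eb, h, map_zero]
    have := congrFun h1 ⟨1, by omega⟩
    simp at this
  have hab0 : a + b ≠ 0 := by
    intro h
    have h2 : (Pi.single (⟨0, by omega⟩ : Fin r) (1 : ZMod 2))
        + (Pi.single ⟨1, by omega⟩ 1 : Fin r → ZMod 2) = 0 := by
      rw [← ea, ← eb, ← map_add, h, map_zero]
    have := congrFun h2 ⟨0, by omega⟩
    rw [Pi.add_apply, Pi.single_eq_same, Pi.single_eq_of_ne h01] at this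
    simp at this
  -- memberships
  have hx1 : ((w₁ : V) + w₁) ∈ X := by
    have : Submodule.Quotient.mk (p := Q) (w₁ + w₁) = 0 := by
      rw [Submodule.Quotient.mk_add, hw₁]; exact two_tor a
    simpa using (memX (w₁ + w₁)).mp this
  have hx2 : ((w₂ : V) + w₂) ∈ X := by
    have : Submodule.Quotient.mk (p := Q) (w₂ + w₂) = 0 := by
      rw [Submodule.Quotient.mk_add, hw₂]; exact two_tor b
    simpa using (memX (w₂ + w₂)).mp this
  have hn1 : (w₁ : V) ∉ X := fun h => ha0 (by rw [← hw₁]; exact (memX w₁).mpr h)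
  have hn2 : (w₂ : V) ∉ X := fun h => hb0 (by rw [← hw₂]; exact (memX w₂).mpr h)
  have hn12 : ((w₁ : V) + w₂) ∉ X := by
    intro h
    apply hab0
    rw [← hw₁, ← hw₂, ← Submodule.Quotient.mk_add]
    exact (memX (w₁ + w₂)).mpr (by simpa using h)
  -- integrality facts
  obtain ⟨n₁, hn₁⟩ := hWX (w₁ : V) w₁.2 _ hx1
  obtain ⟨n₂, hn₂⟩ := hWX (w₂ : V) w₂.2 _ hx2
  obtain ⟨n₃, hn₃⟩ := hWX (w₁ : V) w₁.2 _ hx2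
  rw [inner_add_right] at hn₁ hn₂ hn₃
  -- n₁ odd
  have hodd1 : ¬ (2 ∣ n₁) := by
    rintro ⟨t, rfl⟩
    exact hnonint (w₁ : V) w₁.2 hn1 ⟨t, by push_cast at hn₁ ⊢; linarith⟩
  have hodd2 : ¬ (2 ∣ n₂) := by
    rintro ⟨t, rfl⟩
    exact hnonint (w₂ : V) w₂.2 hn2 ⟨t, by push_cast at hn₂ ⊢; linarith⟩
  obtain ⟨s, hs⟩ : 2 ∣ (n₁ + n₂) := by omega
  apply hnonint ((w₁ : V) + w₂) (W.add_mem w₁.2 w₂.2) hn12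
  refine ⟨s + n₃, ?_⟩
  have hsym : ⟪(w₂ : V), (w₁ : V)⟫ = ⟪(w₁ : V), (w₂ : V)⟫ := real_inner_comm _ _
  have hcast : ((n₁ + n₂ : ℤ) : ℝ) = ((2 * s : ℤ) : ℝ) := by rw [← hs]
  push_cast at hcast
  rw [inner_add_add_self]
  push_cast
  linarith

end
end

section
/- Let X be an abelian group, t : X → X an additive map with t ∘ t = id, and Y ⊆ X a subgroup with t(Y) ⊆ Y such that the quotient X ⧸ Y is finite of odd order. Let c ∈ {1, −1} and suppose t(x) − c·x ∈ Y for every x ∈ X (i.e., t acts on X ⧸ Y as the scalar c). Then for every x ∈ X there exists u ∈ x + Y with t(u) = c·u. -/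
noncomputable section

theorem lift_eigenvector_mod_odd_index
    {X : Type*} [AddCommGroup X] (t : X →+ X) (ht2 : ∀ x, t (t x) = x)
    (Y : AddSubgroup X) (htY : ∀ y ∈ Y, t y ∈ Y)
    [Finite (X ⧸ Y)] (hodd : Odd (Nat.card (X ⧸ Y)))
    (c : ℤ) (hc : c = 1 ∨ c = -1)
    (hscalar : ∀ x : X, t x - c • x ∈ Y) :
    ∀ x : X, ∃ u : X, u - x ∈ Y ∧ t u = c • u := by
  intro x
  obtain ⟨k, hk⟩ := hodd
  set n : ℕ := Nat.card (X ⧸ Y) with hn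
  have hc2 : c * c = 1 := by rcases hc with h | h <;> simp [h]
  set a : ℤ := -(k : ℤ) with ha
  refine ⟨a • (x + c • t x), ?_, ?_⟩
  · -- u - x = (2a-1) • x + (a*c) • (t x - c • x), and 2a - 1 = -n
    have hnx : (n : ℤ) • x ∈ Y := by
      have : ((n : ℤ) • x : X) - 0 ∈ Y := by
        rw [sub_zero]
        have : (QuotientAddGroup.mk ((n : ℤ) • x) : X ⧸ Y) = 0 := by
          have h0 : (n : ℕ) • (QuotientAddGroup.mk x : X ⧸ Y) = 0 :=
            card_nsmul_eq_zero'
          rw [← natCast_zsmul] at h0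
          simpa using h0
        exact (QuotientAddGroup.eq_zero_iff _).mp this
      simpa using this
    have hy : t x - c • x ∈ Y := hscalar x
    have key : a • (x + c • t x) - x
        = (-(n : ℤ)) • x + (a * c) • (t x - c • x) := by
      rw [smul_sub, smul_add, smul_smul, smul_smul]
      have hac : a * c * c = a := by rw [mul_assoc, hc2, mul_one]
      rw [hac]
      have hn2 : (n : ℤ) = 2 * (k : ℤ) + 1 := by exact_mod_cast hk
      rw [hn2, ha]
      module
    rw [key]
    exact Y.add_mem (by simpa using Y.neg_mem hnx) (Y.zsmul_mem hy _)
  · -- t u = c • u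
    have h1 : t (a • (x + c • t x)) = a • (t x + c • x) := by
      rw [map_zsmul, map_add, map_zsmul, ht2]
    have h2 : c • (a • (x + c • t x)) = a • (t x + c • x) := by
      rw [smul_smul, mul_comm, ← smul_smul, smul_add, smul_smul, hc2, one_smul,
        add_comm]
    rw [h1, h2]

end
end

section
/- Let F be a finite field of odd characteristic, V a finite-dimensional F-vector space, Q : V → F a quadratic form, and c a generator of the multiplicative group of F. (i) If the dimension of V is odd, then there exists a linear automorphism g of V with Q(g(v)) = c²·Q(v) for all v ∈ V. (ii) If the dimension of V is even and the bilinear form associated to Q is nondegenerate, then there exists a linear automorphism g of V with Q(g(v)) = c·Q(v) for all v ∈ V. -/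
noncomputable section

open Polynomial in
/-- Over a finite field of odd cardinality, `a*p^2 + b*q^2 = d` is solvable
for nonzero `a`, `b`. -/
lemma exists_rep_binary {F : Type*} [Field F] [Fintype F]
    (hodd : Fintype.card F % 2 = 1) (a b d : F) (ha : a ≠ 0) (hb : b ≠ 0) :
    ∃ p q : F, a * p ^ 2 + b * q ^ 2 = d := by
  obtain ⟨p, q, hpq⟩ := FiniteField.exists_root_sum_quadratic
    (f := C a * X ^ 2 + C 0 * X + C (-d)) (g := C b * X ^ 2 + C 0 * X + C 0)
    (degree_quadratic ha) (degree_quadratic hb) hodd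
  refine ⟨p, q, ?_⟩
  simp only [eval_add, eval_mul, eval_pow, eval_C, eval_X] at hpq
  linear_combination hpq

/-- The key binary step: an explicit automorphism of `F²` multiplying the
diagonal form `a x² + b y²` by a nonzero constant `c`. -/
lemma binary_step {F : Type*} [Field F] [Fintype F]
    (hodd : Fintype.card F % 2 = 1) (a b c : F) (ha : a ≠ 0) (hb : b ≠ 0) (hc : c ≠ 0) :
    ∃ e : (Fin 2 → F) ≃ₗ[F] (Fin 2 → F),
      ∀ x : Fin 2 → F,
        a * (e x 0) ^ 2 + b * (e x 1) ^ 2 = c * (a * (x 0) ^ 2 + b * (x 1) ^ 2) := by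
  obtain ⟨p, q, hpq⟩ := exists_rep_binary hodd a b (c * a) ha hb
  set M : Matrix (Fin 2) (Fin 2) F := !![p, -(b * q) / a; q, p] with hM
  have hdet : M.det = c := by
    rw [hM, Matrix.det_fin_two_of]
    field_simp
    linear_combination hpq
  have hinv : Invertible M := M.invertibleOfIsUnitDet (by rw [hdet]; exact (Ne.isUnit hc))
  refine ⟨M.toLinearEquiv' hinv, fun x => ?_⟩
  have h0 : (M.toLinearEquiv' hinv) x 0 = p * x 0 + (-(b * q) / a) * x 1 := by
    show (M.toLin' x) 0 = _
    simp [Matrix.toLin'_apply, Matrix.mulVec, dotProduct, hM, Fin.sum_univ_two]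
  have h1 : (M.toLinearEquiv' hinv) x 1 = q * x 0 + p * x 1 := by
    show (M.toLin' x) 1 = _
    simp [Matrix.toLin'_apply, Matrix.mulVec, dotProduct, hM, Fin.sum_univ_two]
  rw [h0, h1]
  field_simp
  ring_nf
  linear_combination (a * (x 0) ^ 2 + b * (x 1) ^ 2) * hpq

theorem scalar_multiple_of_quadratic_form
    {F : Type*} [Field F] [Fintype F] (hchar : ringChar F ≠ 2)
    {V : Type*} [AddCommGroup V] [Module F V] [FiniteDimensional F V]
    (Q : QuadraticForm F V) (c : Fˣ) (hc : ∀ u : Fˣ, u ∈ Subgroup.zpowers c) :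
    (Odd (Module.finrank F V) →
      ∃ g : V ≃ₗ[F] V, ∀ v : V, Q (g v) = ((c : F)) ^ 2 * Q v) ∧
    (Even (Module.finrank F V) → (QuadraticMap.polarBilin Q).Nondegenerate →
      ∃ g : V ≃ₗ[F] V, ∀ v : V, Q (g v) = (c : F) * Q v) := by
  have hodd : Fintype.card F % 2 = 1 := FiniteField.odd_card_of_char_ne_two hchar
  have h2 : (2 : F) ≠ 0 := by
    intro h
    haveI := ringChar.charP F
    have hd : ringChar F ∣ 2 := (CharP.cast_eq_zero_iff F (ringChar F) 2).mp (by exact_mod_cast h)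
    have hp : (ringChar F).Prime := CharP.char_is_prime F (ringChar F)
    exact hchar ((Nat.prime_dvd_prime_iff_eq hp Nat.prime_two).mp hd)
  constructor
  · intro _
    refine ⟨LinearEquiv.smulOfUnit c, fun v => ?_⟩
    have : (LinearEquiv.smulOfUnit c) v = (c : F) • v := rfl
    rw [this, QuadraticMap.map_smul, smul_eq_mul]
    ring
  · intro heven hnd
    haveI : Invertible (2 : F) := invertibleOfNonzero h2
    -- associated bilinear form is separating left
    have hsep : (QuadraticMap.associated (R := F) Q).SeparatingLeft := by
      intro x hx
      refine hnd.1 x fun y => ?_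
      show ((QuadraticMap.polarBilin Q) x) y = 0
      rw [← QuadraticMap.two_nsmul_associated F Q, LinearMap.smul_apply,
        LinearMap.smul_apply, hx y, smul_zero]
    obtain ⟨w, ⟨φ⟩⟩ := Q.equivalent_weightedSumSquares_units_of_nondegenerate' hsep
    obtain ⟨m, hm⟩ := heven
    have hm2 : m * 2 = Module.finrank F V := by omega
    let e : Fin m × Fin 2 ≃ Fin (Module.finrank F V) := finProdFinEquiv.trans (finCongr hm2)
    let ψ : (Fin (Module.finrank F V) → F) ≃ₗ[F] (Fin m → Fin 2 → F) :=
      (LinearEquiv.funCongrLeft F F e).trans (LinearEquiv.curry F F (Fin m) (Fin 2))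
    let χ : V ≃ₗ[F] (Fin m → Fin 2 → F) := φ.toLinearEquiv.trans ψ
    have hχ : ∀ v : V, Q v = ∑ i : Fin m, ∑ j : Fin 2,
        (w (e (i, j)) : F) * (χ v i j) ^ 2 := by
      intro v
      have := φ.map_app v
      rw [QuadraticMap.weightedSumSquares_apply] at this
      rw [← this]
      rw [← Equiv.sum_comp e (fun k => w k • (φ v k * φ v k))]
      rw [Fintype.sum_prod_type]
      refine Finset.sum_congr rfl fun i _ => Finset.sum_congr rfl fun j _ => ?_
      have hval : χ v i j = φ v (e (i, j)) := rfl
      rw [hval, Units.smul_def, smul_eq_mul, sq]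
    -- binary transformations for each pair
    have key : ∀ i : Fin m, ∃ ei : (Fin 2 → F) ≃ₗ[F] (Fin 2 → F),
        ∀ x : Fin 2 → F,
          (w (e (i, 0)) : F) * (ei x 0) ^ 2 + (w (e (i, 1)) : F) * (ei x 1) ^ 2
          = (c : F) * ((w (e (i, 0)) : F) * (x 0) ^ 2 + (w (e (i, 1)) : F) * (x 1) ^ 2) :=
      fun i => binary_step hodd _ _ _ (w (e (i, 0))).ne_zero (w (e (i, 1))).ne_zero c.ne_zero
    choose ei hei using key
    let g' : (Fin m → Fin 2 → F) ≃ₗ[F] (Fin m → Fin 2 → F) := LinearEquiv.piCongrRight ei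
    refine ⟨(χ.trans g').trans χ.symm, fun v => ?_⟩
    have hgv : χ ((χ.trans g').trans χ.symm v) = g' (χ v) := by
      simp
    rw [hχ ((χ.trans g').trans χ.symm v), hχ v, Finset.mul_sum]
    refine Finset.sum_congr rfl fun i _ => ?_
    have hg'i : ∀ j, χ ((χ.trans g').trans χ.symm v) i j = (ei i) (χ v i) j := by
      intro j; rw [hgv]; rfl
    rw [Fin.sum_univ_two, Fin.sum_univ_two, hg'i, hg'i, hei i (χ v i)]

end
end

section
/- Let V be a finite-dimensional real inner product space and let L ⊆ V be a ℤ-submodule whose ℝ-span is V, such that L is integral (⟪x, y⟫ ∈ ℤ for all x, y ∈ L), even (⟪x, x⟫ ∈ 2ℤ for all x ∈ L), and rootless (no x ∈ L with ⟪x, x⟫ = 2). Let L* := {v ∈ V : ⟪v, x⟫ ∈ ℤ for all x ∈ L} be the dual lattice. Suppose g is a linear isometry of V with g ∘ g ∘ g = id and g(L) = L, such that the only v ∈ V with g(v) = v is v = 0, and such that g(v) − v ∈ L for every v ∈ L*. Then every nonzero v ∈ L* satisfies ⟪v, v⟫ ≥ 4/3. -/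
open scoped InnerProductSpace

local notation "⟪" x ", " y "⟫" => @inner ℝ _ _ x y

noncomputable section

theorem dual_min_norm_of_fixed_point_free_triality
    {V : Type*} [NormedAddCommGroup V] [InnerProductSpace ℝ V] [FiniteDimensional ℝ V]
    (L : Submodule ℤ V) (hfull : Submodule.span ℝ (L : Set V) = ⊤)
    (hint : ∀ x ∈ L, ∀ y ∈ L, ∃ n : ℤ, ⟪x, y⟫ = (n : ℝ))
    (heven : ∀ x ∈ L, ∃ n : ℤ, ⟪x, x⟫ = 2 * (n : ℝ))
    (hroot : ∀ x ∈ L, ⟪x, x⟫ ≠ (2 : ℝ))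
    (g : V ≃ₗᵢ[ℝ] V)
    (hg3 : ∀ v, g (g (g v)) = v)
    (hgL : ∀ x : V, x ∈ L ↔ g x ∈ L)
    (hfix : ∀ v : V, g v = v → v = 0)
    (hdual : ∀ v : V, (∀ x ∈ L, ∃ n : ℤ, ⟪v, x⟫ = (n : ℝ)) → g v - v ∈ L) :
    ∀ v : V, (∀ x ∈ L, ∃ n : ℤ, ⟪v, x⟫ = (n : ℝ)) → v ≠ 0 → (4 / 3 : ℝ) ≤ ⟪v, v⟫ := by
  intro v hv hv0
  have hxL : g v - v ∈ L := hdual v hv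
  have hxne : g v - v ≠ 0 := by
    intro h
    exact hv0 (hfix v (by rwa [sub_eq_zero] at h))
  -- 1 + g + g² = 0 on v
  have hsum : v + g v + g (g v) = 0 := by
    apply hfix
    rw [map_add, map_add, hg3 v]
    abel
  have hiso : ∀ a b : V, ⟪g a, g b⟫ = ⟪a, b⟫ := fun a b => g.inner_map_map a b
  have h2 : ⟪v, g (g v)⟫ = ⟪v, g v⟫ := by
    have ha := hiso (g v) (g (g v))
    rw [hg3 v] at ha
    rw [real_inner_comm, ha]
    exact hiso v (g v)
  have hsum' : ⟪v, v⟫ + 2 * ⟪v, g v⟫ = 0 := by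
    have h0 : ⟪v, v + g v + g (g v)⟫ = 0 := by rw [hsum, inner_zero_right]
    rw [inner_add_right, inner_add_right, h2] at h0
    linarith
  have hgvv : ⟪g v, g v⟫ = ⟪v, v⟫ := hiso v v
  have hxx : ⟪g v - v, g v - v⟫ = 3 * ⟪v, v⟫ := by
    have hc : ⟪g v, v⟫ = ⟪v, g v⟫ := real_inner_comm _ _
    rw [inner_sub_sub_self, hgvv]
    linarith [hsum', hc]
  obtain ⟨n, hn⟩ := heven _ hxL
  have hpos : (0 : ℝ) < ⟪g v - v, g v - v⟫ := by
    rw [real_inner_self_eq_norm_sq]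
    have hnz : ‖g v - v‖ ≠ 0 := norm_ne_zero_iff.mpr hxne
    positivity
  have hne2 : ⟪g v - v, g v - v⟫ ≠ 2 := hroot _ hxL
  have hn1 : n ≠ 1 := by
    rintro rfl
    apply hne2
    rw [hn]; norm_num
  have hnpos : 0 < n := by
    by_contra h
    push_neg at h
    have : (n : ℝ) ≤ 0 := by exact_mod_cast h
    nlinarith
  have hn2 : 2 ≤ n := by omega
  have : (4 : ℝ) ≤ ⟪g v - v, g v - v⟫ := by
    rw [hn]
    have : (2 : ℝ) ≤ (n : ℝ) := by exact_mod_cast hn2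
    linarith
  linarith [hxx ▸ this]

end
end

section
/- Let V be a finite-dimensional real inner product space and L ⊆ V an integral lattice (⟪x, y⟫ ∈ ℤ for all x, y ∈ L). For a submodule S ⊆ L set ann_L(S) := {x ∈ L : ⟪x, s⟫ = 0 for all s ∈ S}, and call S RSSD in L if 2x ∈ S + ann_L(S) for every x ∈ L. Let N ⊆ M ⊆ L be ℤ-submodules such that M and N are both RSSD in L and M is a direct summand of L in the sense that M = L ∩ ℝ-span(M). Then ann_M(N) := {x ∈ M : ⟪x, n⟫ = 0 for all n ∈ N} is RSSD in L. -/
open scoped InnerProductSpace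

local notation "⟪" x ", " y "⟫" => @inner ℝ _ _ x y

noncomputable section

variable {V : Type*} [NormedAddCommGroup V] [InnerProductSpace ℝ V] [FiniteDimensional ℝ V]

/-- `ann_L(S)`: the elements of `L` orthogonal to all of `S`. -/
def annIn (L S : Submodule ℤ V) : Submodule ℤ V where
  carrier := {x | x ∈ L ∧ ∀ s ∈ S, ⟪x, s⟫ = (0 : ℝ)}
  zero_mem' := ⟨L.zero_mem, fun s _ => inner_zero_left s⟩
  add_mem' := by
    rintro x y ⟨hxL, hx⟩ ⟨hyL, hy⟩
    exact ⟨L.add_mem hxL hyL, fun s hs => by rw [inner_add_left, hx s hs, hy s hs, add_zero]⟩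
  smul_mem' := by
    rintro n x ⟨hxL, hx⟩
    refine ⟨L.smul_mem n hxL, fun s hs => ?_⟩
    have h : (n • x : V) = (n : ℝ) • x := by rw [Int.cast_smul_eq_zsmul]
    rw [h, real_inner_smul_left, hx s hs, mul_zero]

/-- `S` is RSSD (relatively semiselfdual) in `L`: `2L ⊆ S + ann_L(S)`. -/
def IsRSSD (L S : Submodule ℤ V) : Prop :=
  ∀ x ∈ L, (2 : ℤ) • x ∈ S ⊔ annIn L S

theorem annihilator_is_RSSD
    (L : Submodule ℤ V)
    (hint : ∀ x ∈ L, ∀ y ∈ L, ∃ n : ℤ, ⟪x, y⟫ = (n : ℝ))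
    (M N : Submodule ℤ V) (hNM : N ≤ M) (hML : M ≤ L)
    (hMr : IsRSSD L M) (hNr : IsRSSD L N)
    (hMsummand : (M : Set V) = (L : Set V) ∩ (Submodule.span ℝ (M : Set V) : Set V)) :
    IsRSSD L (annIn M N) := by
  intro x hx
  obtain ⟨m, hm, m', hm', hsum⟩ := Submodule.mem_sup.mp (hMr x hx)
  obtain ⟨n, hn, n', hn', hsum'⟩ := Submodule.mem_sup.mp (hNr x hx)
  obtain ⟨hm'L, hm'perp⟩ := hm'
  obtain ⟨hn'L, hn'perp⟩ := hn'
  have key : m + m' = n + n' := hsum.trans hsum'.symm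
  have hdiff : m - n = n' - m' := by
    rw [sub_eq_sub_iff_add_eq_add, key, add_comm]
  have hA : m - n ∈ annIn M N := by
    refine ⟨M.sub_mem hm (hNM hn), fun s hs => ?_⟩
    rw [hdiff, inner_sub_left, hn'perp s hs, hm'perp s (hNM hs), sub_zero]
  have hperp : n + m' ∈ annIn L (annIn M N) := by
    refine ⟨L.add_mem (hML (hNM hn)) hm'L, fun s hs => ?_⟩
    obtain ⟨hsM, hsperp⟩ := hs
    have h1 : ⟪n, s⟫ = (0 : ℝ) := by rw [real_inner_comm]; exact hsperp n hn
    rw [inner_add_left, h1, hm'perp s hsM, add_zero]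
  have heq : m - n + (n + m') = (2 : ℤ) • x := by
    rw [← hsum]; abel
  exact Submodule.mem_sup.mpr ⟨m - n, hA, n + m', hperp, heq⟩

end
end

section
/- Let J be a symmetric 2×2 integer matrix that is positive definite (xᵀJx > 0 for every nonzero x ∈ ℝ²). (i) If det J ≤ 6, then there exists a nonzero x ∈ ℤ² with xᵀJx ∈ {1, 2}. (ii) If det J ∈ {1, 2}, then J is ℤ-congruent to a diagonal matrix. (iii) If det J ≤ 6 and both diagonal entries of J are even, then J is ℤ-congruent to !![2, 0; 0, 2] or to !![2, −1; −1, 2]. -/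
open Matrix

noncomputable section

private lemma transpose_fin_two' (a b c d : ℤ) : !![a,b;c,d]ᵀ = !![a,c;b,d] := by
  ext i j; fin_cases i <;> fin_cases j <;> rfl

private lemma reduce_aux : ∀ n : ℕ, ∀ a b c : ℤ, a.toNat = n → 0 < a → 0 < a * c - b * b →
    ∃ (P : Matrix (Fin 2) (Fin 2) ℤ) (a' b' c' : ℤ),
      (P.det = 1 ∨ P.det = -1) ∧
      P * !![a, b; b, c] * Pᵀ = !![a', b'; b', c'] ∧
      0 < a' ∧ a' ≤ c' ∧ 2 * |b'| ≤ a' ∧ a' * c' - b' * b' = a * c - b * b ∧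
      (2 ∣ a → 2 ∣ c → 2 ∣ a' ∧ 2 ∣ c') := by
  intro n
  induction n using Nat.strong_induction_on with
  | _ n ih =>
    intro a b c hn ha hdet
    obtain ⟨k, hk⟩ : ∃ k : ℤ, 2 * |b - k * a| ≤ a := by
      have h1 : b % a = b - a * (b / a) := Int.emod_def b a
      have hr0 : 0 ≤ b % a := Int.emod_nonneg b ha.ne'
      have hra : b % a < a := Int.emod_lt_of_pos b ha
      rcases le_or_gt (2 * (b % a)) a with h | h
      · refine ⟨b / a, ?_⟩
        rw [show b - b / a * a = b % a by linear_combination -h1, abs_of_nonneg hr0]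
        omega
      · refine ⟨b / a + 1, ?_⟩
        rw [show b - (b / a + 1) * a = b % a - a by linear_combination -h1,
          abs_of_nonpos (by omega)]
        omega
    set b₁ := b - k * a with hb1def
    set c₁ := a * k ^ 2 - 2 * b * k + c with hc1def
    have hdet1 : a * c₁ - b₁ * b₁ = a * c - b * b := by rw [hb1def, hc1def]; ring
    have hac1 : 0 < a * c₁ := by nlinarith [sq_nonneg b₁]
    have hc1pos : 0 < c₁ := by
      by_contra h
      push_neg at h
      nlinarith
    have hc1even : 2 ∣ a → 2 ∣ c → 2 ∣ c₁ := by
      rintro ⟨a2, rfl⟩ ⟨c2, rfl⟩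
      exact ⟨a2 * k ^ 2 - b * k + c2, by rw [hc1def]; ring⟩
    rcases le_or_gt a c₁ with hle | hlt
    · -- translation only
      refine ⟨!![1, 0; -k, 1], a, b₁, c₁, ?_, ?_, ha, hle, hk, hdet1,
        fun h1 h2 => ⟨h1, hc1even h1 h2⟩⟩
      · left; rw [Matrix.det_fin_two_of]; ring
      · rw [transpose_fin_two']
        ext i j
        fin_cases i <;> fin_cases j <;>
          simp [Matrix.mul_apply, Fin.sum_univ_two, hb1def, hc1def] <;> ring
    · -- translate, swap, recurse
      have hd2 : 0 < c₁ * a - b₁ * b₁ := by rw [mul_comm]; linarith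
      obtain ⟨Q, a', b', c', hQdet, hQ, ha', hle', hb', hdet', hpar⟩ :=
        ih c₁.toNat (by omega) c₁ b₁ a rfl hc1pos hd2
      have hM : !![(-k : ℤ), 1; 1, 0] * !![a, b; b, c] * !![(-k : ℤ), 1; 1, 0]ᵀ
          = !![c₁, b₁; b₁, a] := by
        rw [transpose_fin_two']
        ext i j
        fin_cases i <;> fin_cases j <;>
          simp [Matrix.mul_apply, Fin.sum_univ_two, hb1def, hc1def] <;> ring
      refine ⟨Q * !![(-k : ℤ), 1; 1, 0], a', b', c', ?_, ?_, ha', hle', hb', by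
          rw [hdet']; rw [mul_comm c₁ a]; linarith, fun h1 h2 => hpar (hc1even h1 h2) h1⟩
      · rw [Matrix.det_mul, Matrix.det_fin_two_of]
        rcases hQdet with h | h <;> rw [h] <;> [right; left] <;> ring
      · rw [Matrix.transpose_mul]
        calc Q * !![(-k : ℤ), 1; 1, 0] * !![a, b; b, c] * (!![(-k : ℤ), 1; 1, 0]ᵀ * Qᵀ)
            = Q * (!![(-k : ℤ), 1; 1, 0] * !![a, b; b, c] * !![(-k : ℤ), 1; 1, 0]ᵀ) * Qᵀ := by
              simp only [Matrix.mul_assoc]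
          _ = !![a', b'; b', c'] := by rw [hM, hQ]

theorem rank_two_lattice_classification
    (J : Matrix (Fin 2) (Fin 2) ℤ) (hsymm : J.IsSymm)
    (hpos : ∀ x : Fin 2 → ℝ, x ≠ 0 → 0 < x ⬝ᵥ ((J.map (Int.cast : ℤ → ℝ)) *ᵥ x)) :
    -- (i) if det J ≤ 6 there is a vector of norm 1 or 2
    (J.det ≤ 6 → ∃ x : Fin 2 → ℤ, x ≠ 0 ∧ (x ⬝ᵥ (J *ᵥ x) = 1 ∨ x ⬝ᵥ (J *ᵥ x) = 2)) ∧
    -- (ii) if det J ∈ {1, 2} then J is ℤ-congruent to a diagonal matrix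
    ((J.det = 1 ∨ J.det = 2) → ∃ P : Matrix (Fin 2) (Fin 2) ℤ,
      (P.det = 1 ∨ P.det = -1) ∧ (P * J * Pᵀ).IsDiag) ∧
    -- (iii) if J is even and det J ≤ 6 then J is A1 ⊥ A1 or A2
    ((∀ i, 2 ∣ J i i) → J.det ≤ 6 → ∃ P : Matrix (Fin 2) (Fin 2) ℤ,
      (P.det = 1 ∨ P.det = -1) ∧
      (P * J * Pᵀ = !![2, 0; 0, 2] ∨ P * J * Pᵀ = !![2, -1; -1, 2])) := by
  have h10 : J 1 0 = J 0 1 := (hsymm.apply 1 0).symm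
  set a := J 0 0 with hadef
  set b := J 0 1 with hbdef
  set c := J 1 1 with hcdef
  have hJ : J = !![a, b; b, c] := by
    conv_lhs => rw [Matrix.eta_fin_two J]
    rw [h10]
  have hval : ∀ u v : ℝ, (![u, v]) ⬝ᵥ ((J.map (Int.cast : ℤ → ℝ)) *ᵥ ![u, v])
      = u * ((a : ℝ) * u + (b : ℝ) * v) + v * ((b : ℝ) * u + (c : ℝ) * v) := by
    intro u v
    simp [dotProduct, Matrix.mulVec, Fin.sum_univ_two, Matrix.map_apply, h10, hadef, hbdef, hcdef]
  have ha : 0 < a := by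
    have h := hpos ![1, 0] (by
      intro h; have := congrFun h 0; simp at this)
    rw [hval 1 0] at h
    have : (0 : ℝ) < (a : ℝ) := by linarith
    exact_mod_cast this
  have hc : 0 < c := by
    have h := hpos ![0, 1] (by
      intro h; have := congrFun h 1; simp at this)
    rw [hval 0 1] at h
    have : (0 : ℝ) < (c : ℝ) := by linarith
    exact_mod_cast this
  have hdet0 : 0 < a * c - b * b := by
    have h := hpos ![(c : ℝ), -(b : ℝ)] (by
      intro h
      have h0 := congrFun h 0
      simp at h0
      exact absurd h0 (by exact_mod_cast hc.ne'))
    rw [hval c (-(b : ℝ))] at h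
    have hcr : (0 : ℝ) < (c : ℝ) := by exact_mod_cast hc
    have : (0 : ℝ) < (a : ℝ) * c - b * b := by nlinarith
    exact_mod_cast this
  have hdetJ : J.det = a * c - b * b := by
    rw [hJ, Matrix.det_fin_two_of]
  obtain ⟨P, a', b', c', hPdet, hPJ', ha', hlec, hb', hdet', hpar⟩ :=
    reduce_aux a.toNat a b c rfl ha hdet0
  rw [← hJ] at hPJ'
  have hdd : a' * c' - b' * b' = J.det := by rw [hdet', hdetJ]
  have habs : (2 * |b'|) * (2 * |b'|) ≤ a' * a' :=
    mul_le_mul hb' hb' (by positivity) ha'.le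
  have hbsq : |b'| * |b'| = b' * b' := abs_mul_abs_self b'
  have haac : a' * a' ≤ a' * c' := mul_le_mul_of_nonneg_left hlec ha'.le
  -- entry (0,0) as a value of the form
  have hentry : (![P 0 0, P 0 1]) ⬝ᵥ (J *ᵥ ![P 0 0, P 0 1]) = a' := by
    have h00 : (P * J * Pᵀ) 0 0 = (!![a', b'; b', c'] : Matrix (Fin 2) (Fin 2) ℤ) 0 0 :=
      congrArg (fun M : Matrix (Fin 2) (Fin 2) ℤ => M 0 0) hPJ'
    rw [show (!![a', b'; b', c'] : Matrix (Fin 2) (Fin 2) ℤ) 0 0 = a' from rfl] at h00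
    rw [← h00]
    simp [Matrix.mul_apply, dotProduct, Matrix.mulVec, Matrix.transpose_apply,
      Fin.sum_univ_two]
    ring
  refine ⟨?_, ?_, ?_⟩
  · -- (i)
    intro hle
    have ha2 : a' ≤ 2 := by
      nlinarith [habs, hbsq, haac, sq_nonneg (a' - 3), hdd, hle]
    refine ⟨![P 0 0, P 0 1], ?_, ?_⟩
    · intro h
      rw [h] at hentry
      simp at hentry
      omega
    · rw [hentry]; omega
  · -- (ii)
    intro hd12
    have hd2 : a' * c' - b' * b' ≤ 2 := by omega
    have ha1 : a' ≤ 1 := by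
      nlinarith [habs, hbsq, haac, sq_nonneg (a' - 2), hd2]
    have hb0 : b' = 0 := by
      have h1 : |b'| ≤ 0 := by linarith [hb']
      have h2 := abs_nonneg b'
      exact abs_eq_zero.mp (le_antisymm h1 h2)
    refine ⟨P, hPdet, ?_⟩
    rw [hPJ', hb0]
    intro i j hij
    fin_cases i <;> fin_cases j <;> first | exact absurd rfl hij | rfl
  · -- (iii)
    intro heven hle
    obtain ⟨hea, hec⟩ := hpar (heven 0) (heven 1)
    have ha2 : a' ≤ 2 := by
      nlinarith [habs, hbsq, haac, sq_nonneg (a' - 3), hdd, hle]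
    have ha2' : a' = 2 := by omega
    subst ha2'
    have hbabs : |b'| ≤ 1 := by linarith
    obtain ⟨hbl, hbr⟩ := abs_le.mp hbabs
    have hdpos : 0 < 2 * c' - b' * b' := by linarith [hdet', hdet0]
    interval_cases b'
    · -- b' = -1
      have hdj : 2 * c' - 1 = J.det := by linarith [hdd]
      have hc2 : c' = 2 := by omega
      exact ⟨P, hPdet, Or.inr (by rw [hPJ', hc2])⟩
    · -- b' = 0
      have hdj : 2 * c' = J.det := by linarith [hdd]
      have hc2 : c' = 2 := by omega
      exact ⟨P, hPdet, Or.inl (by rw [hPJ', hc2])⟩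
    · -- b' = 1
      have hdj : 2 * c' - 1 = J.det := by linarith [hdd]
      have hc2 : c' = 2 := by omega
      refine ⟨!![1, 0; 0, -1] * P, ?_, Or.inr ?_⟩
      · rw [Matrix.det_mul, Matrix.det_fin_two_of]
        rcases hPdet with h | h <;> rw [h] <;> [right; left] <;> ring
      · rw [Matrix.transpose_mul]
        calc !![(1 : ℤ), 0; 0, -1] * P * J * (Pᵀ * !![(1 : ℤ), 0; 0, -1]ᵀ)
            = !![(1 : ℤ), 0; 0, -1] * (P * J * Pᵀ) * !![(1 : ℤ), 0; 0, -1]ᵀ := by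
              simp only [Matrix.mul_assoc]
          _ = !![2, -1; -1, 2] := by
              rw [hPJ', hc2, transpose_fin_two']
              ext i j
              fin_cases i <;> fin_cases j <;>
                simp [Matrix.mul_apply, Fin.sum_univ_two]
end
end

section
/- There is no symmetric 4×4 integer matrix M that is positive definite (xᵀMx > 0 for every nonzero x ∈ ℝ⁴), has all diagonal entries even, and has det M = 3. In other words, there does not exist an even positive definite integral lattice of rank 4 and determinant 3. -/
open Matrix

noncomputable section

/-- The determinant polynomial of an even symmetric 4×4 matrix over `ZMod 4`,
rewritten without subtraction (using `3 = -1` in `ZMod 4`), as a `ℕ`-polynomial. -/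
def detP (d0 d1 d2 d3 a b c e f g : ℕ) : ℕ :=
  d0 * (d1*d2*d3 + 3*(d1*g*g) + 3*(e*e*d3) + e*g*f + f*e*g + 3*(f*d2*f))
  + 3*(a * (a*d2*d3 + 3*(a*g*g) + 3*(e*b*d3) + e*g*c + f*b*g + 3*(f*d2*c)))
  + b * (a*e*d3 + 3*(a*g*f) + 3*(d1*b*d3) + d1*g*c + f*b*f + 3*(f*e*c))
  + 3*(c * (a*e*g + 3*(a*d2*f) + 3*(d1*b*g) + d1*d2*c + e*b*f + 3*(e*e*c)))

set_option maxHeartbeats 0 in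
theorem detP_chk : ([0,2].all fun d0 => [0,2].all fun d1 => [0,2].all fun d2 =>
    [0,2].all fun d3 => (List.range 4).all fun a => (List.range 4).all fun b =>
    (List.range 4).all fun c => (List.range 4).all fun e =>
    (List.range 4).all fun f => (List.range 4).all fun g =>
    detP d0 d1 d2 d3 a b c e f g % 4 != 3) = true := by rfl

theorem detP_keyNat : ∀ d0 d1 d2 d3 a b c e f g : ℕ,
    (d0 = 0 ∨ d0 = 2) → (d1 = 0 ∨ d1 = 2) → (d2 = 0 ∨ d2 = 2) → (d3 = 0 ∨ d3 = 2) →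
    a < 4 → b < 4 → c < 4 → e < 4 → f < 4 → g < 4 →
    detP d0 d1 d2 d3 a b c e f g % 4 ≠ 3 := by
  intro d0 d1 d2 d3 a b c e f g h0 h1 h2 h3 ha hb hc he hf hg
  have h := detP_chk
  simp only [List.all_eq_true, List.mem_range, List.mem_cons, List.mem_singleton,
    List.not_mem_nil, or_false, bne_iff_ne, ne_eq] at h
  exact h _ h0 _ h1 _ h2 _ h3 _ ha _ hb _ hc _ he _ hf _ hg

theorem det_fin_four' {R : Type*} [CommRing R] (A : Matrix (Fin 4) (Fin 4) R) :
    det A =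
      A 0 0 * (A 1 1 * A 2 2 * A 3 3 - A 1 1 * A 2 3 * A 3 2 - A 1 2 * A 2 1 * A 3 3
        + A 1 2 * A 2 3 * A 3 1 + A 1 3 * A 2 1 * A 3 2 - A 1 3 * A 2 2 * A 3 1)
      - A 0 1 * (A 1 0 * A 2 2 * A 3 3 - A 1 0 * A 2 3 * A 3 2 - A 1 2 * A 2 0 * A 3 3
        + A 1 2 * A 2 3 * A 3 0 + A 1 3 * A 2 0 * A 3 2 - A 1 3 * A 2 2 * A 3 0)
      + A 0 2 * (A 1 0 * A 2 1 * A 3 3 - A 1 0 * A 2 3 * A 3 1 - A 1 1 * A 2 0 * A 3 3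
        + A 1 1 * A 2 3 * A 3 0 + A 1 3 * A 2 0 * A 3 1 - A 1 3 * A 2 1 * A 3 0)
      - A 0 3 * (A 1 0 * A 2 1 * A 3 2 - A 1 0 * A 2 2 * A 3 1 - A 1 1 * A 2 0 * A 3 2
        + A 1 1 * A 2 2 * A 3 0 + A 1 2 * A 2 0 * A 3 1 - A 1 2 * A 2 1 * A 3 0) := by
  rw [det_succ_row_zero]
  simp (config := { decide := true }) [Fin.sum_univ_succ, det_fin_three, Fin.succAbove,
    show (Fin.succ 2 : Fin 4) = 3 from rfl, show (Fin.castSucc 2 : Fin 4) = 2 from rfl]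
  ring

theorem bridge (d0 d1 d2 d3 a b c e f g : ZMod 4) :
    d0 * (d1 * d2 * d3 - d1 * g * g - e * e * d3 + e * g * f + f * e * g - f * d2 * f)
    - a * (a * d2 * d3 - a * g * g - e * b * d3 + e * g * c + f * b * g - f * d2 * c)
    + b * (a * e * d3 - a * g * f - d1 * b * d3 + d1 * g * c + f * b * f - f * e * c)
    - c * (a * e * g - a * d2 * f - d1 * b * g + d1 * d2 * c + e * b * f - e * e * c)
    =
    d0 * (d1*d2*d3 + 3*(d1*g*g) + 3*(e*e*d3) + e*g*f + f*e*g + 3*(f*d2*f))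
    + 3*(a * (a*d2*d3 + 3*(a*g*g) + 3*(e*b*d3) + e*g*c + f*b*g + 3*(f*d2*c)))
    + b * (a*e*d3 + 3*(a*g*f) + 3*(d1*b*d3) + d1*g*c + f*b*f + 3*(f*e*c))
    + 3*(c * (a*e*g + 3*(a*d2*f) + 3*(d1*b*g) + d1*d2*c + e*b*f + 3*(e*e*c))) := by
  have h4 : (4 : ZMod 4) = 0 := by decide
  linear_combination (-(d0*(d1*g*g + e*e*d3 + f*d2*f)
    + a*(a*d2*d3 - a*g*g - e*b*d3 + e*g*c + f*b*g - f*d2*c)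
    + 3*a*(a*g*g + e*b*d3 + f*d2*c)
    + b*(a*g*f + d1*b*d3 + f*e*c)
    + c*(a*e*g - a*d2*f - d1*b*g + d1*d2*c + e*b*f - e*e*c)
    + 3*c*(a*d2*f + d1*b*g + e*e*c))) * h4

theorem no_even_rank_four_det_three :
    ¬∃ M : Matrix (Fin 4) (Fin 4) ℤ, M.IsSymm ∧
      (∀ x : Fin 4 → ℝ, x ≠ 0 → 0 < x ⬝ᵥ ((M.map (Int.cast : ℤ → ℝ)) *ᵥ x)) ∧
      (∀ i, 2 ∣ M i i) ∧ M.det = 3 := by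
  rintro ⟨M, hsym, -, heven, hdet⟩
  set N : Matrix (Fin 4) (Fin 4) (ZMod 4) := M.map (Int.cast : ℤ → ZMod 4) with hN
  have hdet4 : N.det = 3 := by
    have h := RingHom.map_det (Int.castRingHom (ZMod 4)) M
    rw [hdet, RingHom.mapMatrix_apply] at h
    have : (M.map ⇑(Int.castRingHom (ZMod 4))) = N := rfl
    rw [this] at h
    rw [← h]; decide
  rw [det_fin_four' N] at hdet4
  -- symmetry of N
  have hs : ∀ i j, N j i = N i j := fun i j => by
    simp only [hN, Matrix.map_apply, hsym.apply]
  -- off-diagonal entries as Nat casts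
  have hoff : ∀ i j, ((N i j).val : ZMod 4) = N i j := fun i j =>
    ZMod.natCast_rightInverse (N i j)
  -- diagonal entries
  have hdiag : ∀ i, ∃ d : ℕ, (d = 0 ∨ d = 2) ∧ N i i = (d : ZMod 4) := by
    intro i
    obtain ⟨k, hk⟩ := heven i
    set κ : ZMod 4 := ((k : ℤ) : ZMod 4) with hκ
    refine ⟨2 * (κ.val % 2), by omega, ?_⟩
    have h1 : N i i = 2 * κ := by
      simp only [hN, Matrix.map_apply, hk]
      push_cast
      ring
    have h2 : ((2 * κ.val : ℕ) : ZMod 4) = ((2 * (κ.val % 2) : ℕ) : ZMod 4) :=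
      (ZMod.natCast_eq_natCast_iff' _ _ 4).mpr (by omega)
    rw [h1, ← h2]
    push_cast
    rw [ZMod.natCast_rightInverse κ]
  obtain ⟨d0, hd0, he0⟩ := hdiag 0
  obtain ⟨d1, hd1, he1⟩ := hdiag 1
  obtain ⟨d2, hd2, he2⟩ := hdiag 2
  obtain ⟨d3, hd3, he3⟩ := hdiag 3
  set a := (N 0 1).val with ha
  set b := (N 0 2).val with hb
  set c := (N 0 3).val with hc
  set e := (N 1 2).val with he
  set f := (N 1 3).val with hf
  set g := (N 2 3).val with hg
  rw [he0, he1, he2, he3,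
    show N 1 0 = N 0 1 from hs 0 1, show N 2 0 = N 0 2 from hs 0 2,
    show N 3 0 = N 0 3 from hs 0 3, show N 2 1 = N 1 2 from hs 1 2,
    show N 3 1 = N 1 3 from hs 1 3, show N 3 2 = N 2 3 from hs 2 3,
    ← hoff 0 1, ← hoff 0 2, ← hoff 0 3, ← hoff 1 2, ← hoff 1 3, ← hoff 2 3] at hdet4
  have h3 : ((detP d0 d1 d2 d3 a b c e f g : ℕ) : ZMod 4) = ((3 : ℕ) : ZMod 4) := by
    unfold detP
    push_cast
    linear_combination hdet4 - bridge (d0 : ZMod 4) (d1 : ZMod 4) (d2 : ZMod 4) (d3 : ZMod 4)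
      (a : ZMod 4) (b : ZMod 4) (c : ZMod 4) (e : ZMod 4) (f : ZMod 4) (g : ZMod 4)
  have h4 := (ZMod.natCast_eq_natCast_iff' _ _ 4).mp h3
  exact detP_keyNat d0 d1 d2 d3 a b c e f g hd0 hd1 hd2 hd3
    (ZMod.val_lt _) (ZMod.val_lt _) (ZMod.val_lt _) (ZMod.val_lt _)
    (ZMod.val_lt _) (ZMod.val_lt _) h4

end
end
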